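/- The map from sp(2g,ℤ/2) to ℤ/2 sending [[a,b],[c,a^t]] to Tr(a) + ⟨Diag(b),Diag(c)⟩ is a quadratic form whose associated bilinear form is b(([[a,b],[c,a^t]]),([[a',b'],[c',a'^t]])) = ⟨Diag(b),Diag(c')⟩ + ⟨Diag(b'),Diag(c)⟩, and both the quadratic form and the bilinear form are invariant under the conjugation action of Sp(2g,2). -/

import Mathlib

open Matrix

/-- The standard symplectic form matrix `J = [[0, I], [-I, 0]]`. -/
def Jmat (g : ℕ) (R : Type*) [CommRing R] :
    Matrix (Fin g ⊕ Fin g) (Fin g ⊕ Fin g) R :=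
  Matrix.fromBlocks 0 1 (-1) 0

/-- The symplectic Lie algebra `sp(2g, 𝔽₂)`. -/
def spSet2 (g : ℕ) : Set (Matrix (Fin g ⊕ Fin g) (Fin g ⊕ Fin g) (ZMod 2)) :=
  {Y | Jmat g (ZMod 2) * Y + Yᵀ * Jmat g (ZMod 2) = 0}

/-- `q([[a,b],[c,aᵀ]]) = Tr a + ⟨Diag b, Diag c⟩` on `sp(2g,2)`. -/
def qsp (g : ℕ) (Y : Matrix (Fin g ⊕ Fin g) (Fin g ⊕ Fin g) (ZMod 2)) : ZMod 2 :=
  (∑ i : Fin g, Y (Sum.inl i) (Sum.inl i)) +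
    ∑ i : Fin g, Y (Sum.inl i) (Sum.inr i) * Y (Sum.inr i) (Sum.inl i)

/-- The associated bilinear form
`b(Y, Y') = ⟨Diag b, Diag c'⟩ + ⟨Diag b', Diag c⟩`. -/
def bsp (g : ℕ) (Y Y' : Matrix (Fin g ⊕ Fin g) (Fin g ⊕ Fin g) (ZMod 2)) : ZMod 2 :=
  (∑ i : Fin g, Y (Sum.inl i) (Sum.inr i) * Y' (Sum.inr i) (Sum.inl i)) +
    ∑ i : Fin g, Y' (Sum.inl i) (Sum.inr i) * Y (Sum.inr i) (Sum.inl i)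

namespace Stmt12Aux

/-! ### Element-level facts about `ZMod 2` and `ZMod 4` -/

abbrev r2 : ZMod 4 →+* ZMod 2 := ZMod.castHom (show 2 ∣ 4 by norm_num) (ZMod 2)

def l2 (x : ZMod 2) : ZMod 4 := (x.val : ZMod 4)

lemma r2_l2 : ∀ x : ZMod 2, r2 (l2 x) = x := by decide
lemma l2_mul : ∀ x y : ZMod 2, 2 * (l2 x * l2 y) = 2 * l2 (x * y) := by decide
lemma l2_inj : ∀ x y : ZMod 2, 2 * l2 x = 2 * l2 y → x = y := by decide
lemma z_two : ∀ e : ZMod 4, r2 e = 0 → e + e = 0 := by decide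
lemma z_mul : ∀ e f : ZMod 4, r2 e = 0 → r2 f = 0 → e * f = 0 := by decide
lemma zx : ∀ x e : ZMod 4, r2 e = 0 → x * e + x * e = 0 := by decide
lemma neg2 : ∀ x : ZMod 2, -x = x := by decide
lemma addeq2 : ∀ x y : ZMod 2, x + y = 0 → x = y := by decide
lemma selfadd2 : ∀ x : ZMod 2, x + x = 0 := by decide
lemma sq2 : ∀ x : ZMod 2, x * x = x := by decide

/-- `x ↦ 2·(lift of x)` as an additive hom `ZMod 2 →+ ZMod 4`. -/
def phi : ZMod 2 →+ ZMod 4 where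
  toFun x := 2 * l2 x
  map_zero' := by decide
  map_add' := by decide

/-! ### Symmetric double sums in characteristic 2 -/

lemma sym_sum {g : ℕ} (x : Fin g → Fin g → ZMod 2) (hx : ∀ i j, x i j = x j i) :
    ∑ i, ∑ j, x i j = ∑ i, x i i := by
  have key : ∀ i j : Fin g, x i j =
      (if i < j then x i j else 0) + (if j < i then x j i else 0)
        + (if i = j then x i i else 0) := by
    intro i j
    rcases lt_trichotomy i j with h | h | h
    · simp [h, h.ne, not_lt_of_gt h]
    · simp [h, lt_irrefl]
    · simp [h, h.ne', not_lt_of_gt h, hx i j]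
  calc ∑ i, ∑ j, x i j
      = ∑ i, ∑ j, ((if i < j then x i j else 0) + (if j < i then x j i else 0)
          + (if i = j then x i i else 0)) := by
        refine Finset.sum_congr rfl fun i _ => Finset.sum_congr rfl fun j _ => key i j
    _ = (∑ i, ∑ j, if i < j then x i j else 0) + (∑ i, ∑ j, if j < i then x j i else 0)
          + ∑ i, ∑ j, if i = j then x i i else 0 := by
        simp [Finset.sum_add_distrib]
    _ = ∑ i, x i i := by
        have h1 : (∑ i, ∑ j, if j < i then x j i else 0)
            = ∑ i, ∑ j, if i < j then x i j else 0 := Finset.sum_comm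
        have h3 : (∑ i, ∑ j : Fin g, if i = j then x i i else 0) = ∑ i, x i i := by
          refine Finset.sum_congr rfl fun i _ => ?_
          simp
        rw [h1, h3, selfadd2, zero_add]

/-! ### Entry relations for elements of `sp` -/

lemma sp_entries {g : ℕ} {Y : Matrix (Fin g ⊕ Fin g) (Fin g ⊕ Fin g) (ZMod 2)}
    (hY : Y ∈ spSet2 g) :
    (∀ i j, Y (Sum.inl i) (Sum.inr j) = Y (Sum.inl j) (Sum.inr i)) ∧
    (∀ i j, Y (Sum.inr i) (Sum.inl j) = Y (Sum.inr j) (Sum.inl i)) ∧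
    (∀ i j, Y (Sum.inr i) (Sum.inr j) = Y (Sum.inl j) (Sum.inl i)) := by
  have h : ∀ p q, (Jmat g (ZMod 2) * Y) p q + (Yᵀ * Jmat g (ZMod 2)) p q = 0 := by
    intro p q
    have := congrFun (congrFun hY p) q
    simpa [Matrix.add_apply] using this
  refine ⟨fun i j => ?_, fun i j => ?_, fun i j => ?_⟩
  · have := h (Sum.inr i) (Sum.inr j)
    simp [Jmat, Matrix.mul_apply, Matrix.fromBlocks, Fintype.sum_sum_type,
      Matrix.one_apply, Matrix.transpose_apply, neg2, Finset.sum_ite_eq,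
      Finset.sum_ite_eq'] at this
    exact addeq2 _ _ this
  · have := h (Sum.inl i) (Sum.inl j)
    simp [Jmat, Matrix.mul_apply, Matrix.fromBlocks, Fintype.sum_sum_type,
      Matrix.one_apply, Matrix.transpose_apply, neg2, Finset.sum_ite_eq,
      Finset.sum_ite_eq'] at this
    exact addeq2 _ _ this
  · have := h (Sum.inl i) (Sum.inr j)
    simp [Jmat, Matrix.mul_apply, Matrix.fromBlocks, Fintype.sum_sum_type,
      Matrix.one_apply, Matrix.transpose_apply, neg2, Finset.sum_ite_eq,
      Finset.sum_ite_eq'] at this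
    exact addeq2 _ _ this

/-! ### `bsp` is the trace form on `sp` -/

lemma bsp_eq_trace {g : ℕ} {Y Y' : Matrix (Fin g ⊕ Fin g) (Fin g ⊕ Fin g) (ZMod 2)}
    (hY : Y ∈ spSet2 g) (hY' : Y' ∈ spSet2 g) :
    bsp g Y Y' = trace (Y * Y') := by
  obtain ⟨hb, hc, hd⟩ := sp_entries hY
  obtain ⟨hb', hc', hd'⟩ := sp_entries hY'
  have expand : trace (Y * Y') =
      (∑ i : Fin g, ∑ j : Fin g, Y (Sum.inl i) (Sum.inl j) * Y' (Sum.inl j) (Sum.inl i)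
        + ∑ i : Fin g, ∑ j : Fin g, Y (Sum.inl i) (Sum.inr j) * Y' (Sum.inr j) (Sum.inl i))
      + (∑ i : Fin g, ∑ j : Fin g, Y (Sum.inr i) (Sum.inl j) * Y' (Sum.inl j) (Sum.inr i)
        + ∑ i : Fin g, ∑ j : Fin g, Y (Sum.inr i) (Sum.inr j) * Y' (Sum.inr j) (Sum.inr i)) := by
    simp only [Matrix.trace, Matrix.diag, Matrix.mul_apply, Fintype.sum_sum_type,
      Finset.sum_add_distrib]
    ring
  have T4 : (∑ i : Fin g, ∑ j : Fin g, Y (Sum.inr i) (Sum.inr j) * Y' (Sum.inr j) (Sum.inr i))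
      = ∑ i : Fin g, ∑ j : Fin g, Y (Sum.inl i) (Sum.inl j) * Y' (Sum.inl j) (Sum.inl i) := by
    rw [Finset.sum_comm]
    refine Finset.sum_congr rfl fun i _ => Finset.sum_congr rfl fun j _ => ?_
    rw [hd, hd', mul_comm]
  have T2 : (∑ i : Fin g, ∑ j : Fin g, Y (Sum.inl i) (Sum.inr j) * Y' (Sum.inr j) (Sum.inl i))
      = ∑ i : Fin g, Y (Sum.inl i) (Sum.inr i) * Y' (Sum.inr i) (Sum.inl i) := by
    refine sym_sum _ fun i j => ?_
    rw [hb i j, hc' j i]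
  have T3 : (∑ i : Fin g, ∑ j : Fin g, Y (Sum.inr i) (Sum.inl j) * Y' (Sum.inl j) (Sum.inr i))
      = ∑ i : Fin g, Y' (Sum.inl i) (Sum.inr i) * Y (Sum.inr i) (Sum.inl i) := by
    have := sym_sum (fun i j => Y (Sum.inr i) (Sum.inl j) * Y' (Sum.inl j) (Sum.inr i))
      (fun i j => by rw [hc i j, hb' j i])
    rw [this]
    exact Finset.sum_congr rfl fun i _ => mul_comm _ _
  rw [expand, T4, T2, T3, bsp]
  generalize (∑ i : Fin g, ∑ j : Fin g,
    Y (Sum.inl i) (Sum.inl j) * Y' (Sum.inl j) (Sum.inl i)) = A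
  generalize (∑ i : Fin g, Y (Sum.inl i) (Sum.inr i) * Y' (Sum.inr i) (Sum.inl i)) = B
  generalize (∑ i : Fin g, Y' (Sum.inl i) (Sum.inr i) * Y (Sum.inr i) (Sum.inl i)) = C
  have : A + A = 0 := selfadd2 A
  linear_combination (norm := ring_nf) -this

/-! ### Conjugation preserves `sp` -/

lemma sp_conj {g : ℕ} {P Q Y : Matrix (Fin g ⊕ Fin g) (Fin g ⊕ Fin g) (ZMod 2)}
    (hP : Pᵀ * Jmat g (ZMod 2) * P = Jmat g (ZMod 2)) (hPQ : P * Q = 1) (hQP : Q * P = 1)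
    (hY : Y ∈ spSet2 g) : P * Y * Q ∈ spSet2 g := by
  set J := Jmat g (ZMod 2) with hJdef
  have hJP : J * P = Qᵀ * J := by
    calc J * P = (Qᵀ * Pᵀ) * (J * P) := by
          rw [← Matrix.transpose_mul, hPQ, Matrix.transpose_one, one_mul]
      _ = Qᵀ * (Pᵀ * J * P) := by noncomm_ring
      _ = Qᵀ * J := by rw [hP]
  have hPJ : Pᵀ * J = J * Q := by
    calc Pᵀ * J = Pᵀ * J * (P * Q) := by rw [hPQ, mul_one]
      _ = (Pᵀ * J * P) * Q := by noncomm_ring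
      _ = J * Q := by rw [hP]
  have hY0 : J * Y + Yᵀ * J = 0 := hY
  show J * (P * Y * Q) + (P * Y * Q)ᵀ * J = 0
  have key : J * (P * Y * Q) + (P * Y * Q)ᵀ * J = Qᵀ * (J * Y + Yᵀ * J) * Q := by
    have e1 : J * (P * Y * Q) = Qᵀ * (J * Y) * Q := by
      calc J * (P * Y * Q) = (J * P) * Y * Q := by noncomm_ring
        _ = (Qᵀ * J) * Y * Q := by rw [hJP]
        _ = Qᵀ * (J * Y) * Q := by noncomm_ring
    have e2 : (P * Y * Q)ᵀ * J = Qᵀ * (Yᵀ * J) * Q := by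
      calc (P * Y * Q)ᵀ * J = Qᵀ * Yᵀ * (Pᵀ * J) := by
            rw [Matrix.transpose_mul, Matrix.transpose_mul]; noncomm_ring
        _ = Qᵀ * Yᵀ * (J * Q) := by rw [hPJ]
        _ = Qᵀ * (Yᵀ * J) * Q := by noncomm_ring
    rw [e1, e2]; noncomm_ring
  rw [key, hY0, mul_zero, zero_mul]

/-! ### The mod 4 lift and the trace-square formula for `q` -/

def lift4 {n m : Type*} (Y : Matrix n m (ZMod 2)) : Matrix n m (ZMod 4) := Y.map l2

lemma map_lift4 {n m : Type*} (Y : Matrix n m (ZMod 2)) : (lift4 Y).map r2 = Y := by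
  ext p q; exact r2_l2 _

/-- The trace of the square of a mod 4 matrix only depends on its reduction mod 2. -/
lemma trace_sq_congr {n : Type*} [Fintype n] [DecidableEq n]
    (M N : Matrix n n (ZMod 4)) (h : M.map r2 = N.map r2) :
    trace (M * M) = trace (N * N) := by
  have hD : ∀ p q, r2 ((N - M) p q) = 0 := by
    intro p q
    have := congrFun (congrFun h p) q
    simp only [Matrix.map_apply] at this
    simp [Matrix.sub_apply, map_sub, this]
  have hN : N = M + (N - M) := by abel
  set D := N - M with hDdef
  have expand : N * N = M * M + (M * D + D * M + D * D) := by
    rw [hN]; noncomm_ring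
  have hDD : trace (D * D) = 0 := by
    simp only [Matrix.trace, Matrix.diag, Matrix.mul_apply]
    refine Finset.sum_eq_zero fun p _ => Finset.sum_eq_zero fun k _ => ?_
    exact z_mul _ _ (hD p k) (hD k p)
  have hMD : trace (M * D) + trace (D * M) = 0 := by
    rw [Matrix.trace_mul_comm D M]
    simp only [Matrix.trace, Matrix.diag, Matrix.mul_apply]
    rw [← Finset.sum_add_distrib]
    refine Finset.sum_eq_zero fun p _ => ?_
    rw [← Finset.sum_add_distrib]
    refine Finset.sum_eq_zero fun k _ => zx _ _ (hD k p)
  rw [expand, Matrix.trace_add, Matrix.trace_add, Matrix.trace_add, hMD, hDD]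
  simp

/-- For `Y ∈ sp(2g,2)`, the trace of the square of its canonical mod 4 lift is `2·q(Y)`. -/
lemma trace_struct {g : ℕ} {Y : Matrix (Fin g ⊕ Fin g) (Fin g ⊕ Fin g) (ZMod 2)}
    (hY : Y ∈ spSet2 g) :
    trace (lift4 Y * lift4 Y) = 2 * l2 (qsp g Y) := by
  obtain ⟨hb, hc, hd⟩ := sp_entries hY
  have expand : trace (lift4 Y * lift4 Y) =
      (∑ i : Fin g, ∑ j : Fin g, l2 (Y (Sum.inl i) (Sum.inl j)) * l2 (Y (Sum.inl j) (Sum.inl i))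
        + ∑ i : Fin g, ∑ j : Fin g, l2 (Y (Sum.inl i) (Sum.inr j)) * l2 (Y (Sum.inr j) (Sum.inl i)))
      + (∑ i : Fin g, ∑ j : Fin g, l2 (Y (Sum.inr i) (Sum.inl j)) * l2 (Y (Sum.inl j) (Sum.inr i))
        + ∑ i : Fin g, ∑ j : Fin g, l2 (Y (Sum.inr i) (Sum.inr j)) * l2 (Y (Sum.inr j) (Sum.inr i))) := by
    simp only [Matrix.trace, Matrix.diag, Matrix.mul_apply, Fintype.sum_sum_type,
      Finset.sum_add_distrib, lift4, Matrix.map_apply]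
    ring
  set T1 : ZMod 4 := ∑ i : Fin g, ∑ j : Fin g,
    l2 (Y (Sum.inl i) (Sum.inl j)) * l2 (Y (Sum.inl j) (Sum.inl i)) with hT1
  set T2 : ZMod 4 := ∑ i : Fin g, ∑ j : Fin g,
    l2 (Y (Sum.inl i) (Sum.inr j)) * l2 (Y (Sum.inr j) (Sum.inl i)) with hT2
  have e4 : (∑ i : Fin g, ∑ j : Fin g,
      l2 (Y (Sum.inr i) (Sum.inr j)) * l2 (Y (Sum.inr j) (Sum.inr i))) = T1 := by
    rw [hT1, Finset.sum_comm]
    refine Finset.sum_congr rfl fun i _ => Finset.sum_congr rfl fun j _ => ?_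
    rw [hd, hd, mul_comm]
  have e3 : (∑ i : Fin g, ∑ j : Fin g,
      l2 (Y (Sum.inr i) (Sum.inl j)) * l2 (Y (Sum.inl j) (Sum.inr i))) = T2 := by
    rw [hT2, Finset.sum_comm]
    refine Finset.sum_congr rfl fun i _ => Finset.sum_congr rfl fun j _ => ?_
    rw [mul_comm]
  rw [expand, e3, e4]
  have hsum : T1 + T2 + (T2 + T1) = 2 * T1 + 2 * T2 := by ring
  rw [hsum]
  have h1 : 2 * T1 = phi (∑ i : Fin g, ∑ j : Fin g,
      Y (Sum.inl i) (Sum.inl j) * Y (Sum.inl j) (Sum.inl i)) := by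
    rw [map_sum]
    rw [hT1, Finset.mul_sum]
    refine Finset.sum_congr rfl fun i _ => ?_
    rw [map_sum, Finset.mul_sum]
    refine Finset.sum_congr rfl fun j _ => ?_
    exact l2_mul _ _
  have h2 : 2 * T2 = phi (∑ i : Fin g, ∑ j : Fin g,
      Y (Sum.inl i) (Sum.inr j) * Y (Sum.inr j) (Sum.inl i)) := by
    rw [map_sum]
    rw [hT2, Finset.mul_sum]
    refine Finset.sum_congr rfl fun i _ => ?_
    rw [map_sum, Finset.mul_sum]
    refine Finset.sum_congr rfl fun j _ => ?_
    exact l2_mul _ _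
  have s1 : (∑ i : Fin g, ∑ j : Fin g, Y (Sum.inl i) (Sum.inl j) * Y (Sum.inl j) (Sum.inl i))
      = ∑ i : Fin g, Y (Sum.inl i) (Sum.inl i) := by
    rw [sym_sum _ fun i j => by rw [mul_comm]]
    exact Finset.sum_congr rfl fun i _ => sq2 _
  have s2 : (∑ i : Fin g, ∑ j : Fin g, Y (Sum.inl i) (Sum.inr j) * Y (Sum.inr j) (Sum.inl i))
      = ∑ i : Fin g, Y (Sum.inl i) (Sum.inr i) * Y (Sum.inr i) (Sum.inl i) :=
    sym_sum _ fun i j => by rw [hb i j, hc j i]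
  rw [h1, h2, s1, s2, ← map_add, qsp]
  rfl

/-! ### Conjugation invariance of `q` via the mod 4 lift -/

lemma q_conj {g : ℕ} {P Q Y : Matrix (Fin g ⊕ Fin g) (Fin g ⊕ Fin g) (ZMod 2)}
    (hP : Pᵀ * Jmat g (ZMod 2) * P = Jmat g (ZMod 2)) (hPQ : P * Q = 1) (hQP : Q * P = 1)
    (hY : Y ∈ spSet2 g) : qsp g (P * Y * Q) = qsp g Y := by
  have hconj : P * Y * Q ∈ spSet2 g := sp_conj hP hPQ hQP hY
  set P4 : Matrix (Fin g ⊕ Fin g) (Fin g ⊕ Fin g) (ZMod 4) := lift4 P with hP4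
  set Q4 : Matrix (Fin g ⊕ Fin g) (Fin g ⊕ Fin g) (ZMod 4) := lift4 Q with hQ4
  set L : Matrix (Fin g ⊕ Fin g) (Fin g ⊕ Fin g) (ZMod 4) := lift4 Y with hL
  set M : Matrix (Fin g ⊕ Fin g) (Fin g ⊕ Fin g) (ZMod 4) := Q4 * P4 with hM
  have hMr : M.map r2 = 1 := by
    rw [hM, Matrix.map_mul, hQ4, hP4, map_lift4, map_lift4, hQP]
  have hD : ∀ p q, r2 ((M - 1) p q) = 0 := by
    intro p q
    have h1 := congrFun (congrFun hMr p) q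
    simp only [Matrix.map_apply] at h1
    have e : r2 ((M - 1) p q) = r2 (M p q) - r2 ((1 : Matrix _ _ (ZMod 4)) p q) := by
      rw [Matrix.sub_apply, map_sub]
    rw [e, h1]
    by_cases hpq : p = q
    · subst hpq
      rw [Matrix.one_apply_eq, Matrix.one_apply_eq, _root_.map_one, sub_self]
    · simp only [Matrix.one_apply_ne hpq, _root_.map_zero, sub_zero]
  have hD1 : (M - 1) * (M - 1) = 0 := by
    ext p q
    simp only [Matrix.mul_apply, Matrix.zero_apply]
    exact Finset.sum_eq_zero fun k _ => z_mul _ _ (hD p k) (hD k q)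
  have hD2 : (M - 1) + (M - 1) = 0 := by
    ext p q
    simp only [Matrix.add_apply, Matrix.zero_apply]
    exact z_two _ (hD p q)
  have hM2 : M * M = 1 := by
    have e : M * M = 1 + ((M - 1) * (M - 1) + ((M - 1) + (M - 1))) := by noncomm_ring
    rw [e, hD1, hD2]; simp
  have hMM : M + M = 1 + 1 := by
    have e : M + M = ((M - 1) + (M - 1)) + (1 + 1) := by abel
    rw [e, hD2, zero_add]
  set Q4' : Matrix (Fin g ⊕ Fin g) (Fin g ⊕ Fin g) (ZMod 4) := Q4 + Q4 - M * Q4 with hQ4'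
  have hQ'P : Q4' * P4 = 1 := by
    have e : Q4' * P4 = (Q4 * P4 + Q4 * P4) - M * (Q4 * P4) := by
      rw [hQ4']; noncomm_ring
    rw [e, ← hM, hMM, hM2, add_sub_cancel_right]
  have hMQ : (M * Q4).map r2 = Q := by
    rw [Matrix.map_mul, hMr, hQ4, map_lift4, one_mul]
  have hQ'r : Q4'.map r2 = Q := by
    ext p q
    have e1 := congrFun (congrFun hMQ p) q
    have e2 := congrFun (congrFun (map_lift4 Q) p) q
    simp only [Matrix.map_apply] at e1 e2 ⊢
    rw [hQ4']
    simp only [Matrix.sub_apply, Matrix.add_apply, map_sub, map_add]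
    rw [e1]
    have e2' : r2 (Q4 p q) = Q p q := e2
    rw [e2', add_sub_cancel_right]
  have step1 : trace (lift4 (P * Y * Q) * lift4 (P * Y * Q))
      = trace ((P4 * L * Q4') * (P4 * L * Q4')) := by
    apply trace_sq_congr
    rw [map_lift4, Matrix.map_mul, Matrix.map_mul, hP4, hL, map_lift4, map_lift4, hQ'r]
  have step2 : (P4 * L * Q4') * (P4 * L * Q4') = P4 * (L * L) * Q4' := by
    have h1 : Q4' * (P4 * L * Q4') = L * Q4' := by
      simp only [← mul_assoc]
      rw [hQ'P, one_mul]
    calc (P4 * L * Q4') * (P4 * L * Q4') = P4 * L * (Q4' * (P4 * L * Q4')) := by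
          simp only [mul_assoc]
      _ = P4 * L * (L * Q4') := by rw [h1]
      _ = P4 * (L * L) * Q4' := by simp only [mul_assoc]
  have step3 : trace (P4 * (L * L) * Q4') = trace (L * L) := by
    rw [Matrix.trace_mul_comm, ← mul_assoc, hQ'P, one_mul]
  apply l2_inj
  rw [← trace_struct hconj, ← trace_struct hY, step1, step2, step3, hL]

lemma b_conj {g : ℕ} {P Q Y Y' : Matrix (Fin g ⊕ Fin g) (Fin g ⊕ Fin g) (ZMod 2)}
    (hP : Pᵀ * Jmat g (ZMod 2) * P = Jmat g (ZMod 2)) (hPQ : P * Q = 1) (hQP : Q * P = 1)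
    (hY : Y ∈ spSet2 g) (hY' : Y' ∈ spSet2 g) :
    bsp g (P * Y * Q) (P * Y' * Q) = bsp g Y Y' := by
  rw [bsp_eq_trace (sp_conj hP hPQ hQP hY) (sp_conj hP hPQ hQP hY'),
    bsp_eq_trace hY hY']
  have key : (P * Y * Q) * (P * Y' * Q) = P * (Y * Y') * Q := by
    have h1 : Q * (P * Y' * Q) = Y' * Q := by
      simp only [← mul_assoc]
      rw [hQP, one_mul]
    calc (P * Y * Q) * (P * Y' * Q) = P * Y * (Q * (P * Y' * Q)) := by
          simp only [mul_assoc]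
      _ = P * Y * (Y' * Q) := by rw [h1]
      _ = P * (Y * Y') * Q := by simp only [mul_assoc]
  rw [key, Matrix.trace_mul_comm, ← mul_assoc, hQP, one_mul]

end Stmt12Aux

open Stmt12Aux in
/-- `q` is a quadratic form on `sp(2g,2)` with polar form `b`, and both `q` and `b`
are invariant under the conjugation action of `Sp(2g,2)`. -/
theorem stmt12 (g : ℕ) (hg : 1 ≤ g) :
    (∀ Y ∈ spSet2 g, ∀ Y' ∈ spSet2 g,
      qsp g (Y + Y') = qsp g Y + qsp g Y' + bsp g Y Y') ∧
    (∀ Y₁ Y₂ Y₃, bsp g (Y₁ + Y₂) Y₃ = bsp g Y₁ Y₃ + bsp g Y₂ Y₃ ∧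
      bsp g Y₃ (Y₁ + Y₂) = bsp g Y₃ Y₁ + bsp g Y₃ Y₂) ∧
    (∀ P Q : Matrix (Fin g ⊕ Fin g) (Fin g ⊕ Fin g) (ZMod 2),
      Pᵀ * Jmat g (ZMod 2) * P = Jmat g (ZMod 2) → P * Q = 1 → Q * P = 1 →
      ∀ Y ∈ spSet2 g, ∀ Y' ∈ spSet2 g,
        qsp g (P * Y * Q) = qsp g Y ∧ bsp g (P * Y * Q) (P * Y' * Q) = bsp g Y Y') := by
  refine ⟨fun Y _ Y' _ => ?_, fun Y₁ Y₂ Y₃ => ⟨?_, ?_⟩, fun P Q hP hPQ hQP Y hY Y' hY' =>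
    ⟨q_conj hP hPQ hQP hY, b_conj hP hPQ hQP hY hY'⟩⟩
  · simp only [qsp, bsp, Matrix.add_apply, add_mul, mul_add, Finset.sum_add_distrib]
    ring
  · simp only [bsp, Matrix.add_apply, add_mul, mul_add, Finset.sum_add_distrib]
    ring
  · simp only [bsp, Matrix.add_apply, add_mul, mul_add, Finset.sum_add_distrib]
    ring
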